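/- arXiv:2504.17284 — 3 statements merged into one kernel-verified Lean document; each statement's English description precedes it below -/
import Mathlib

section
/- For all integers k ≥ 2, integers p ≥ 1, q ≥ 0, and variables x ≠ y, applying the differential operator 𝒟_{k−1} to the function F(x) = −1/(p^{k−1}(px+q)) (in the first variable, evaluated as a two-variable function of (x,y)) yields (p(x−y)/((px+q)(py+q)))^k. That is, −𝒟_{k−1}(x ↦ 1/(p^{k−1}(px+q)))(x,y) = (p(x−y)/((px+q)(py+q)))^k. -/
open MeasureTheory Set

section VZaux

open Finset

private lemma VZ_hockey (n j : ℕ) :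
    ∑ m ∈ range (j + 1), (n + m).choose m = (n + j + 1).choose j := by
  calc ∑ m ∈ range (j + 1), (n + m).choose m
      = ∑ m ∈ range (j + 1), (m + n).choose n := by
        refine sum_congr rfl fun m _ => ?_
        have h := Nat.choose_symm (Nat.le_add_right m n)
        rw [Nat.add_sub_cancel_left] at h
        rw [add_comm n m, ← h]
    _ = (j + n + 1).choose (n + 1) := Nat.sum_range_add_choose j n
    _ = (n + j + 1).choose j := by
        have h := Nat.choose_symm (show n + 1 ≤ j + n + 1 by omega)
        rw [show j + n + 1 - (n + 1) = j by omega] at h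
        rw [← h, add_comm n j]

private lemma VZ_key1 (n : ℕ) : ∀ x : ℂ,
    ∑ j ∈ range (n + 1), ((n + j).choose j : ℂ) *
      (x ^ (n + 1) * (1 - x) ^ j + (1 - x) ^ (n + 1) * x ^ j) = 1 := by
  induction n with
  | zero => intro x; simp
  | succ n ih =>
    intro x
    by_cases hx0 : x = 0
    · subst hx0
      rw [Finset.sum_eq_single 0]
      · norm_num
      · intro j _ hj
        simp [zero_pow hj, zero_pow (Nat.succ_ne_zero (n + 1))]
      · simp
    by_cases hx1 : x = 1
    · subst hx1
      rw [Finset.sum_eq_single 0]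
      · norm_num
      · intro j _ hj
        simp [zero_pow hj, zero_pow (Nat.succ_ne_zero (n + 1))]
      · simp
    have hy0 : (1 : ℂ) - x ≠ 0 := sub_ne_zero.mpr (Ne.symm hx1)
    set y : ℂ := 1 - x with hy
    have hc : ∀ j : ℕ, ((n + 1 + j).choose j : ℂ) = ∑ m ∈ range (j + 1), ((n + m).choose m : ℂ) := by
      intro j
      rw [← Nat.cast_sum, VZ_hockey]
      norm_cast
      congr 1
      omega
    calc ∑ j ∈ range (n + 2), ((n + 1 + j).choose j : ℂ) * (x ^ (n + 2) * y ^ j + y ^ (n + 2) * x ^ j)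
        = ∑ j ∈ range (n + 2), ∑ m ∈ range (j + 1),
            ((n + m).choose m : ℂ) * (x ^ (n + 2) * y ^ j + y ^ (n + 2) * x ^ j) := by
          refine sum_congr rfl fun j _ => ?_
          rw [hc j, Finset.sum_mul]
      _ = ∑ m ∈ range (n + 2), ∑ j ∈ Ico m (n + 2),
            ((n + m).choose m : ℂ) * (x ^ (n + 2) * y ^ j + y ^ (n + 2) * x ^ j) := by
          simp only [range_eq_Ico]
          exact (Finset.sum_Ico_Ico_comm 0 (n + 2) _).symm
      _ = ∑ m ∈ range (n + 2),
            ((n + m).choose m : ℂ) * (x ^ (n + 1) * (y ^ m - y ^ (n + 2)) + y ^ (n + 1) * (x ^ m - x ^ (n + 2))) := by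
          refine sum_congr rfl fun m hm => ?_
          have hm2 : m ≤ n + 2 := by
            have := Finset.mem_range.mp hm; omega
          have gy : ∑ j ∈ Ico m (n + 2), y ^ j = (y ^ m - y ^ (n + 2)) / x := by
            rw [eq_div_iff hx0]
            have := geom_sum_Ico_mul_neg y hm2
            rwa [hy, sub_sub_cancel] at this
          have gx : ∑ j ∈ Ico m (n + 2), x ^ j = (x ^ m - x ^ (n + 2)) / y := by
            rw [eq_div_iff hy0]
            exact geom_sum_Ico_mul_neg x hm2
          rw [← Finset.mul_sum, Finset.sum_add_distrib, ← Finset.mul_sum, ← Finset.mul_sum, gy, gx]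
          congr 1
          field_simp
          ring
      _ = (∑ m ∈ range (n + 2), ((n + m).choose m : ℂ) * (x ^ (n + 1) * y ^ m + y ^ (n + 1) * x ^ m))
          - (∑ m ∈ range (n + 2), ((n + m).choose m : ℂ)) * (x ^ (n + 1) * y ^ (n + 2) + y ^ (n + 1) * x ^ (n + 2)) := by
          rw [Finset.sum_mul, ← Finset.sum_sub_distrib]
          exact sum_congr rfl fun m _ => by ring
      _ = 1 := by
          rw [Finset.sum_range_succ]
          have hih := ih x
          rw [← hy] at hih
          rw [hih, ← Nat.cast_sum, VZ_hockey]
          have h3 : (n + (n + 1) + 1).choose (n + 1) = 2 * ((n + (n + 1)).choose (n + 1)) := by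
            rw [Nat.choose_succ_succ]
            have h4 := Nat.choose_symm (show n + 1 ≤ n + (n + 1) by omega)
            rw [show n + (n + 1) - (n + 1) = n by omega] at h4
            simp only [Nat.succ_eq_add_one] at h4 ⊢
            omega
          rw [h3]
          have hxy1 : x + y = 1 := by rw [hy]; ring
          push_cast
          linear_combination (-2 * ((n + (n + 1)).choose (n + 1) : ℂ) * x ^ (n + 1) * y ^ (n + 1)) * hxy1

private lemma VZ_key2 (n : ℕ) (a b : ℂ) (h : a + b = a * b) :
    ∑ i ∈ range (n + 1), ((2 * n - i).choose n : ℂ) * (a ^ (i + 1) + b ^ (i + 1)) = (a * b) ^ (n + 1) := by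
  by_cases hs : a + b = 0
  · have hab : a = 0 ∧ b = 0 := by
      have h0 : a * b = 0 := by rw [← h, hs]
      rcases mul_eq_zero.mp h0 with h1 | h1 <;> constructor <;>
        first | exact h1 | (rw [h1] at hs; simpa using hs)
    rw [hab.1, hab.2]
    simp
  · have ha : a ≠ 0 := by
      intro h0; apply hs; rw [h0] at h ⊢; simp at h ⊢; exact h
    have hb : b ≠ 0 := by
      intro h0; apply hs; rw [h0] at h ⊢; simp at h ⊢; exact h
    have habs : a * b ≠ 0 := mul_ne_zero ha hb
    have hsab : a + b = a * b := h
    apply mul_right_cancel₀ (pow_ne_zero n habs)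
    have h1 := VZ_key1 n (a / (a + b))
    have hone : 1 - a / (a + b) = b / (a + b) := by field_simp; ring
    rw [hone] at h1
    calc (∑ i ∈ range (n + 1), ((2 * n - i).choose n : ℂ) * (a ^ (i + 1) + b ^ (i + 1))) * (a * b) ^ n
        = ∑ i ∈ range (n + 1), ((2 * n - i).choose n : ℂ) * (a ^ (i + 1) + b ^ (i + 1)) * (a * b) ^ n := by
          rw [Finset.sum_mul]
      _ = ∑ j ∈ range (n + 1), ((2 * n - (n + 1 - 1 - j)).choose n : ℂ) *
            (a ^ ((n + 1 - 1 - j) + 1) + b ^ ((n + 1 - 1 - j) + 1)) * (a * b) ^ n := by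
          exact (Finset.sum_range_reflect
            (fun i => ((2 * n - i).choose n : ℂ) * (a ^ (i + 1) + b ^ (i + 1)) * (a * b) ^ n) (n + 1)).symm
      _ = ∑ j ∈ range (n + 1), ((n + j).choose j : ℂ) *
            ((a / (a + b)) ^ (n + 1) * (b / (a + b)) ^ j + (b / (a + b)) ^ (n + 1) * (a / (a + b)) ^ j)
            * (a + b) ^ (2 * n + 1) := by
          refine sum_congr rfl fun j hj => ?_
          have hjn : j ≤ n := by have := Finset.mem_range.mp hj; omega
          obtain ⟨m, hm⟩ : ∃ m, n = j + m := ⟨n - j, by omega⟩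
          subst hm
          rw [show 2 * (j + m) - (j + m + 1 - 1 - j) = (j + m) + j by omega,
              show (j + m + 1 - 1 - j) + 1 = m + 1 by omega]
          rw [show ((j + m) + j).choose (j + m) = ((j + m) + j).choose j from by
            have h4 := Nat.choose_symm (Nat.le_add_right (j + m) j)
            rw [Nat.add_sub_cancel_left] at h4
            exact h4.symm]
          rw [hsab]
          simp only [div_pow]
          field_simp
          ring
      _ = (∑ j ∈ range (n + 1), ((n + j).choose j : ℂ) *
            ((a / (a + b)) ^ (n + 1) * (b / (a + b)) ^ j + (b / (a + b)) ^ (n + 1) * (a / (a + b)) ^ j))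
            * (a + b) ^ (2 * n + 1) := by rw [Finset.sum_mul]
      _ = (a * b) ^ (2 * n + 1) := by rw [h1, one_mul, hsab]
      _ = (a * b) ^ (n + 1) * (a * b) ^ n := by rw [← pow_add]; congr 1; omega

private lemma VZ_iter_deriv_recip (c P Q : ℂ) (hc : c ≠ 0) :
    ∀ (i : ℕ) (x : ℂ), P * x + Q ≠ 0 →
      iteratedDeriv i (fun z => 1 / (c * (P * z + Q))) x =
        (-1) ^ i * (Nat.factorial i) * P ^ i / (c * (P * x + Q) ^ (i + 1)) := by
  intro i
  induction i with
  | zero => intro x hx; simp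
  | succ i ih =>
    intro x hx
    have hopen : IsOpen {z : ℂ | P * z + Q ≠ 0} :=
      isOpen_compl_singleton.preimage (by continuity)
    have hev : iteratedDeriv i (fun z => 1 / (c * (P * z + Q))) =ᶠ[nhds x]
        fun z => (-1) ^ i * (Nat.factorial i) * P ^ i / (c * (P * z + Q) ^ (i + 1)) := by
      filter_upwards [hopen.mem_nhds hx] with z hz using ih z hz
    rw [iteratedDeriv_succ, hev.deriv_eq]
    have h1 : HasDerivAt (fun z : ℂ => P * z + Q) P x := by
      simpa using ((hasDerivAt_id x).const_mul P).add_const Q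
    have h2 : HasDerivAt (fun z : ℂ => (P * z + Q) ^ (i + 1))
        ((i + 1 : ℕ) * (P * x + Q) ^ i * P) x := by
      simpa using h1.fun_pow (i + 1)
    have h3 := h2.inv (pow_ne_zero (i + 1) hx)
    have h4 := h3.const_mul ((-1 : ℂ) ^ i * (Nat.factorial i) * P ^ i / c)
    have h5 : (fun z => (-1 : ℂ) ^ i * (Nat.factorial i) * P ^ i / c * ((P * z + Q) ^ (i + 1))⁻¹)
        = fun z => (-1) ^ i * (Nat.factorial i) * P ^ i / (c * (P * z + Q) ^ (i + 1)) := by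
      funext z; field_simp
    rw [← h5, (show HasDerivAt (fun z => (-1 : ℂ) ^ i * (Nat.factorial i) * P ^ i / c * ((P * z + Q) ^ (i + 1))⁻¹) _ x from h4).deriv]
    rw [Nat.factorial_succ]
    push_cast
    field_simp
    ring

set_option maxHeartbeats 1000000 in
private lemma VZ_term_eq (i m : ℕ) (C fact P w X Y : ℂ) (hP : P ≠ 0) (hw : w ≠ 0) (hX : X ≠ 0)
    (hY : Y ≠ 0) (hfac : fact ≠ 0) :
    C * ((-1) ^ i * fact * P ^ i / (P ^ (i + m) * X ^ (i + 1)) -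
        (-1) ^ i * ((-1) ^ i * fact * P ^ i / (P ^ (i + m) * Y ^ (i + 1)))) / (fact * w ^ m)
      = -(C * ((-(P * w) / X) ^ (i + 1) + (P * w / Y) ^ (i + 1)) / (P * w) ^ (i + m + 1)) := by
  have hPi : P ^ i ≠ 0 := pow_ne_zero _ hP
  have hPm : P ^ m ≠ 0 := pow_ne_zero _ hP
  have hXi : X ^ i ≠ 0 := pow_ne_zero _ hX
  have hYi : Y ^ i ≠ 0 := pow_ne_zero _ hY
  have hWi : w ^ i ≠ 0 := pow_ne_zero _ hw
  have hWm : w ^ m ≠ 0 := pow_ne_zero _ hw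
  rcases Nat.even_or_odd i with hpar | hpar <;>
  · simp only [neg_div, neg_pow, pow_succ, pow_add, div_pow, mul_pow, hpar.neg_one_pow]
    obtain ⟨Pi, hgPi⟩ : ∃ t, P ^ i = t := ⟨_, rfl⟩
    obtain ⟨Pm, hgPm⟩ : ∃ t, P ^ m = t := ⟨_, rfl⟩
    obtain ⟨Xi, hgXi⟩ : ∃ t, X ^ i = t := ⟨_, rfl⟩
    obtain ⟨Yi, hgYi⟩ : ∃ t, Y ^ i = t := ⟨_, rfl⟩
    obtain ⟨Wi, hgWi⟩ : ∃ t, w ^ i = t := ⟨_, rfl⟩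
    obtain ⟨Wm, hgWm⟩ : ∃ t, w ^ m = t := ⟨_, rfl⟩
    have hPi' : Pi ≠ 0 := hgPi ▸ hPi
    have hPm' : Pm ≠ 0 := hgPm ▸ hPm
    have hXi' : Xi ≠ 0 := hgXi ▸ hXi
    have hYi' : Yi ≠ 0 := hgYi ▸ hYi
    have hWi' : Wi ≠ 0 := hgWi ▸ hWi
    have hWm' : Wm ≠ 0 := hgWm ▸ hWm
    rw [hgPi, hgPm, hgXi, hgYi, hgWi, hgWm]
    field_simp
    ring

end VZaux

/-- The Vlasenko–Zagier differential operator `𝒟ₙ`. -/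
noncomputable def Dop (n : ℕ) (F : ℂ → ℂ) (x y : ℂ) : ℂ :=
  ∑ i ∈ Finset.range (n + 1),
    (Nat.choose (2 * n - i) n : ℂ) * (iteratedDeriv i F x - (-1) ^ i * iteratedDeriv i F y) /
      ((Nat.factorial i : ℂ) * (y - x) ^ (n - i))

theorem Dop_of_reciprocal (k p : ℕ) (hk : 2 ≤ k) (hp : 1 ≤ p) (q : ℕ) (x y : ℂ) (hxy : x ≠ y)
    (hx : (p : ℂ) * x + q ≠ 0) (hy : (p : ℂ) * y + q ≠ 0) :
    -(Dop (k - 1) (fun z => 1 / ((p : ℂ) ^ (k - 1) * ((p : ℂ) * z + q))) x y) =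
      (((p : ℂ) * (x - y)) / (((p : ℂ) * x + q) * ((p : ℂ) * y + q))) ^ k := by
  obtain ⟨n, rfl⟩ : ∃ n, k = n + 1 := ⟨k - 1, by omega⟩
  simp only [Nat.add_sub_cancel]
  have hP : (p : ℂ) ≠ 0 := Nat.cast_ne_zero.mpr (by omega)
  have hw : y - x ≠ 0 := sub_ne_zero.mpr (Ne.symm hxy)
  have hab : (-((p : ℂ) * (y - x)) / ((p : ℂ) * x + q)) + ((p : ℂ) * (y - x) / ((p : ℂ) * y + q))
      = (-((p : ℂ) * (y - x)) / ((p : ℂ) * x + q)) * ((p : ℂ) * (y - x) / ((p : ℂ) * y + q)) := by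
    field_simp
    ring
  have hS := VZ_key2 n _ _ hab
  have hiter := VZ_iter_deriv_recip ((p : ℂ) ^ n) (p : ℂ) (q : ℂ) (pow_ne_zero n hP)
  have hDop : Dop n (fun z => 1 / ((p : ℂ) ^ n * ((p : ℂ) * z + (q : ℂ)))) x y
      = -(((-((p : ℂ) * (y - x)) / ((p : ℂ) * x + q)) * ((p : ℂ) * (y - x) / ((p : ℂ) * y + q))) ^ (n + 1)
            / ((p : ℂ) * (y - x)) ^ (n + 1)) := by
    rw [Dop, ← hS, Finset.sum_div, ← Finset.sum_neg_distrib]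
    refine Finset.sum_congr rfl fun i hi => ?_
    have hin : i ≤ n := by have := Finset.mem_range.mp hi; omega
    rw [hiter i x hx, hiter i y hy]
    obtain ⟨m, rfl⟩ : ∃ m, n = i + m := ⟨n - i, by omega⟩
    rw [show i + m - i = m from by omega]
    exact VZ_term_eq i m _ _ ((p : ℂ)) (y - x) ((p : ℂ) * x + q) ((p : ℂ) * y + q)
      hP hw hx hy (Nat.cast_ne_zero.mpr i.factorial_ne_zero)
  rw [hDop, neg_neg, ← div_pow]
  congr 1
  field_simp
  ring
end

section
/- For Re(x) > 0, the function 𝓙₁(x) := J₁(x) + log 2 satisfies the two-term functional equation 𝓙₁(x) − (1/x)·𝓙₁(1/x) = 0. -/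
open MeasureTheory Set

noncomputable def digammaC (x : ℂ) : ℂ := deriv Complex.Gamma x / Complex.Gamma x

/-- The Ramanujan period function `𝓕₁`. -/
noncomputable def F1 (x : ℂ) : ℂ :=
  (∑' n : ℕ, (digammaC ((n + 1) * x) - Complex.log ((n + 1) * x) + 1 / (2 * (n + 1) * x))) -
    (1 / 2) * ((Real.eulerMascheroniConstant : ℂ) - Complex.log (2 * Real.pi / x))

/-- `J₁(x) = ∫₀^∞ dt / ((1+e^{-t})(1+e^{xt}))`. -/
noncomputable def J1 (x : ℂ) : ℂ :=
  ∫ t in Set.Ioi (0 : ℝ), 1 / ((1 + Complex.exp (-(t : ℂ))) * (1 + Complex.exp (x * t)))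

namespace J1FE

open Complex Filter Topology

/-! ### Basic nonvanishing facts -/

lemma one_add_exp_ne {z : ℂ} (hz : z.re ≠ 0) : 1 + Complex.exp z ≠ 0 := by
  intro h
  have h1 : Complex.exp z = -1 := by linear_combination h
  have h2 := congrArg (‖·‖) h1
  rw [Complex.norm_exp] at h2
  simp only [norm_neg, norm_one] at h2
  exact hz ((Real.exp_eq_one_iff _).mp h2)

lemma re_mul_ofReal (y : ℂ) (t : ℝ) : (y * (t : ℂ)).re = y.re * t := by
  simp [Complex.mul_re]

lemma norm_exp' (z : ℂ) : ‖Complex.exp z‖ = Real.exp z.re := by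
  rw [Complex.norm_exp]

lemma one_add_exp_mul_ne (y : ℂ) (hy : 0 < y.re) {t : ℝ} (ht : 0 ≤ t) :
    1 + Complex.exp (y * t) ≠ 0 := by
  rcases eq_or_lt_of_le ht with h | h
  · subst h; simp only [Complex.ofReal_zero, mul_zero, Complex.exp_zero]; norm_num
  · exact one_add_exp_ne (by rw [re_mul_ofReal]; positivity)

lemma one_add_exp_neg_mul_ne (y : ℂ) (hy : 0 < y.re) {t : ℝ} (ht : 0 ≤ t) :
    1 + Complex.exp (-(y * t)) ≠ 0 := by
  rcases eq_or_lt_of_le ht with h | h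
  · subst h; simp only [Complex.ofReal_zero, mul_zero, neg_zero, Complex.exp_zero]; norm_num
  · refine one_add_exp_ne ?_
    rw [Complex.neg_re, re_mul_ofReal]
    have : 0 < y.re * t := by positivity
    linarith

lemma one_add_exp_real_ne (t : ℝ) : 1 + Complex.exp (t : ℂ) ≠ 0 := by
  rcases eq_or_ne t 0 with h | h
  · subst h; simp only [Complex.ofReal_zero, Complex.exp_zero]; norm_num
  · exact one_add_exp_ne (by simpa using h)

lemma one_add_exp_neg_real_ne (t : ℝ) : 1 + Complex.exp (-(t : ℂ)) ≠ 0 := by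
  rcases eq_or_ne t 0 with h | h
  · subst h; simp only [Complex.ofReal_zero, neg_zero, Complex.exp_zero]; norm_num
  · exact one_add_exp_ne (by simpa using h)

lemma inv_one_add_exp_eq {z : ℂ} (h1 : 1 + Complex.exp z ≠ 0)
    (h2 : 1 + Complex.exp (-z) ≠ 0) :
    (1 + Complex.exp z)⁻¹ = Complex.exp (-z) * (1 + Complex.exp (-z))⁻¹ := by
  have he := Complex.exp_ne_zero z
  rw [Complex.exp_neg] at h2 ⊢
  field_simp
  rw [add_comm (Complex.exp z) 1, div_self h1]

/-! ### Complex exponential integrals on `(0,∞)` -/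

lemma hasDerivAt_cexpC (c : ℂ) (z : ℂ) :
    HasDerivAt (fun w : ℂ ↦ Complex.exp (-(c * w))) (-c * Complex.exp (-(c * z))) z := by
  simpa [neg_mul, mul_comm] using ((hasDerivAt_id z).const_mul (-c)).cexp

lemma hasDerivAt_cexp (c : ℂ) (t : ℝ) :
    HasDerivAt (fun s : ℝ ↦ Complex.exp (-(c * s))) (-c * Complex.exp (-(c * t))) t :=
  (hasDerivAt_cexpC c t).comp_ofReal

lemma integrableOn_cexp {c : ℂ} (hc : 0 < c.re) :
    IntegrableOn (fun t : ℝ ↦ Complex.exp (-(c * t))) (Ioi 0) := by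
  refine Integrable.mono' (exp_neg_integrableOn_Ioi 0 hc) ?_ ?_
  · exact (Complex.continuous_exp.comp
      ((continuous_const.mul Complex.continuous_ofReal).neg)).aestronglyMeasurable
  · filter_upwards with t
    rw [norm_exp', Complex.neg_re, re_mul_ofReal, neg_mul]

lemma tendsto_cexp_zero {c : ℂ} (hc : 0 < c.re) :
    Tendsto (fun t : ℝ ↦ Complex.exp (-(c * t))) atTop (𝓝 0) := by
  rw [tendsto_zero_iff_norm_tendsto_zero]
  have : ∀ t : ℝ, ‖Complex.exp (-(c * t))‖ = Real.exp (-(c.re * t)) := by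
    intro t; rw [norm_exp', Complex.neg_re, re_mul_ofReal]
  simp only [this]
  refine Real.tendsto_exp_atBot.comp ?_
  exact Filter.tendsto_neg_atTop_atBot.comp (Filter.Tendsto.const_mul_atTop hc tendsto_id)

lemma integral_cexp {c : ℂ} (hc : 0 < c.re) :
    ∫ t in Ioi (0 : ℝ), Complex.exp (-(c * t)) = 1 / c := by
  have hc0 : c ≠ 0 := fun h => by simp [h] at hc
  have hd : ∀ s ∈ Ici (0 : ℝ),
      HasDerivAt (fun t : ℝ ↦ -Complex.exp (-(c * t)) / c) (Complex.exp (-(c * s))) s := by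
    intro s _
    have h := ((hasDerivAt_cexp c s).neg).div_const c
    refine h.congr_deriv (Eq.symm ?_)
    field_simp
  have ht : Tendsto (fun t : ℝ ↦ -Complex.exp (-(c * t)) / c) atTop (𝓝 0) := by
    have := ((tendsto_cexp_zero hc).neg).div_const c
    simpa using this
  rw [integral_Ioi_of_hasDerivAt_of_tendsto' hd (integrableOn_cexp hc) ht]
  simp only [Complex.ofReal_zero, mul_zero, neg_zero, Complex.exp_zero]
  ring

lemma integral_rexp {b : ℝ} (hb : 0 < b) :
    ∫ t in Ioi (0 : ℝ), Real.exp (-(b * t)) = 1 / b := by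
  have hb0 : b ≠ 0 := ne_of_gt hb
  have hd : ∀ s ∈ Ici (0 : ℝ),
      HasDerivAt (fun t : ℝ ↦ -Real.exp (-(b * t)) / b) (Real.exp (-(b * s))) s := by
    intro s _
    have h1 : HasDerivAt (fun t : ℝ ↦ -(b * t)) (-b) s := by
      exact (((hasDerivAt_id s).const_mul b).neg).congr_deriv (by simp)
    have h := ((h1.exp).neg).div_const b
    refine h.congr_deriv (Eq.symm ?_)
    field_simp
  have hint : IntegrableOn (fun t : ℝ ↦ Real.exp (-(b * t))) (Ioi 0) := by
    simpa [neg_mul] using exp_neg_integrableOn_Ioi 0 hb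
  have ht : Tendsto (fun t : ℝ ↦ -Real.exp (-(b * t)) / b) atTop (𝓝 0) := by
    have h2 : Tendsto (fun t : ℝ ↦ Real.exp (-(b * t))) atTop (𝓝 0) := by
      refine Real.tendsto_exp_atBot.comp ?_
      exact Filter.tendsto_neg_atTop_atBot.comp (Filter.Tendsto.const_mul_atTop hb tendsto_id)
    simpa using (h2.neg).div_const b
  rw [integral_Ioi_of_hasDerivAt_of_tendsto' hd hint ht]
  simp only [mul_zero, neg_zero, Real.exp_zero]
  ring

/-! ### Integrability and value of `∫ (1+e^{yt})⁻¹` -/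

lemma continuous_one_add_exp_mul (y : ℂ) : Continuous fun t : ℝ ↦ 1 + Complex.exp (y * t) :=
  continuous_const.add (Complex.continuous_exp.comp (continuous_const.mul Complex.continuous_ofReal))

lemma continuousOn_v (y : ℂ) (hy : 0 < y.re) :
    ContinuousOn (fun t : ℝ ↦ (1 + Complex.exp (y * t))⁻¹) (Ici 0) :=
  ContinuousOn.inv₀ (continuous_one_add_exp_mul y).continuousOn
    fun t ht => one_add_exp_mul_ne y hy ht

lemma norm_v_le (y : ℂ) (hy : 0 < y.re) {t : ℝ} (ht : Real.log 2 / y.re ≤ t) :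
    ‖(1 + Complex.exp (y * t))⁻¹‖ ≤ 2 * Real.exp (-y.re * t) := by
  have h2 : (2 : ℝ) ≤ Real.exp (y.re * t) := by
    have : Real.log 2 ≤ y.re * t := by
      rw [div_le_iff₀ hy] at ht; linarith [ht]
    calc (2:ℝ) = Real.exp (Real.log 2) := (Real.exp_log (by norm_num)).symm
      _ ≤ Real.exp (y.re * t) := Real.exp_le_exp.mpr this
  have hlow : Real.exp (y.re * t) - 1 ≤ ‖1 + Complex.exp (y * t)‖ := by
    calc Real.exp (y.re * t) - 1 = ‖Complex.exp (y * t)‖ - ‖(-1 : ℂ)‖ := by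
          rw [norm_exp', re_mul_ofReal]; simp
      _ ≤ ‖Complex.exp (y * t) - (-1)‖ := norm_sub_norm_le _ _
      _ = ‖1 + Complex.exp (y * t)‖ := by ring_nf
  have hpos : 0 < Real.exp (y.re * t) - 1 := by linarith
  rw [norm_inv]
  have h3 : Real.exp (y.re * t) / 2 ≤ Real.exp (y.re * t) - 1 := by linarith
  have h4 : Real.exp (y.re * t) / 2 ≤ ‖1 + Complex.exp (y * t)‖ := le_trans h3 hlow
  have h5 : ‖1 + Complex.exp (y * t)‖⁻¹ ≤ (Real.exp (y.re * t) / 2)⁻¹ := by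
    apply inv_anti₀ (by positivity) h4
  rw [inv_div] at h5
  rwa [neg_mul, Real.exp_neg, ← div_eq_mul_inv]

lemma integrableOn_v (y : ℂ) (hy : 0 < y.re) :
    IntegrableOn (fun t : ℝ ↦ (1 + Complex.exp (y * t))⁻¹) (Ioi 0) := by
  set T := Real.log 2 / y.re with hT
  have hT0 : 0 < T := div_pos (Real.log_pos (by norm_num)) hy
  have h1 : IntegrableOn (fun t : ℝ ↦ (1 + Complex.exp (y * t))⁻¹) (Ioc 0 T) := by
    refine (((continuousOn_v y hy).mono ?_).integrableOn_Icc).mono_set Ioc_subset_Icc_self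
    exact Icc_subset_Ici_self
  have h2 : IntegrableOn (fun t : ℝ ↦ (1 + Complex.exp (y * t))⁻¹) (Ioi T) := by
    refine Integrable.mono' ((exp_neg_integrableOn_Ioi T hy).const_mul 2) ?_ ?_
    · exact ((continuousOn_v y hy).mono fun t (ht : T < t) => le_of_lt (hT0.trans ht)
        : ContinuousOn _ (Ioi T)).aestronglyMeasurable measurableSet_Ioi
    · filter_upwards [ae_restrict_mem measurableSet_Ioi] with t ht
      exact norm_v_le y hy (le_of_lt ht)
  have := h1.union h2
  rwa [Ioc_union_Ioi_eq_Ioi (le_of_lt hT0)] at this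

lemma slit_one_add_exp_neg (y : ℂ) (hy : 0 < y.re) {s : ℝ} (hs : 0 ≤ s) :
    1 + Complex.exp (-(y * s)) ∈ Complex.slitPlane := by
  rw [Complex.mem_slitPlane_iff]
  left
  rcases eq_or_lt_of_le hs with h | h
  · subst h; simp
  · have hnorm : ‖Complex.exp (-(y * s))‖ < 1 := by
      rw [norm_exp', Complex.neg_re, re_mul_ofReal, Real.exp_lt_one_iff]
      have : 0 < y.re * s := by positivity
      linarith
    have hre : -(Complex.exp (-(y * s))).re ≤ ‖Complex.exp (-(y * s))‖ := by
      calc -(Complex.exp (-(y * s))).re ≤ |(Complex.exp (-(y * s))).re| := neg_le_abs _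
        _ ≤ _ := Complex.abs_re_le_norm _
    simp only [Complex.add_re, Complex.one_re]
    linarith

lemma integral_v (y : ℂ) (hy : 0 < y.re) :
    ∫ t in Ioi (0 : ℝ), (1 + Complex.exp (y * t))⁻¹ = (Real.log 2 : ℂ) / y := by
  have hy0 : y ≠ 0 := fun h => by simp [h] at hy
  have hd : ∀ s ∈ Ici (0 : ℝ),
      HasDerivAt (fun t : ℝ ↦ -Complex.log (1 + Complex.exp (-(y * t))) / y)
        ((1 + Complex.exp (y * s))⁻¹) s := by
    intro s hs
    have hinner : HasDerivAt (fun z : ℂ ↦ 1 + Complex.exp (-(y * z)))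
        (-y * Complex.exp (-(y * s))) (s : ℂ) := (hasDerivAt_cexpC y (s : ℂ)).const_add 1
    have hslit := slit_one_add_exp_neg y hy hs
    have hlog := (Complex.hasDerivAt_log hslit).comp (s : ℂ) hinner
    have h := ((hlog.comp_ofReal).neg).div_const y
    refine h.congr_deriv (Eq.symm ?_)
    have h1 := one_add_exp_mul_ne y hy hs
    have h2 := one_add_exp_neg_mul_ne y hy hs
    rw [inv_one_add_exp_eq h1 h2]
    field_simp
  have ht : Tendsto (fun t : ℝ ↦ -Complex.log (1 + Complex.exp (-(y * t))) / y)
      atTop (𝓝 0) := by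
    have h0 : Tendsto (fun t : ℝ ↦ 1 + Complex.exp (-(y * t))) atTop (𝓝 1) := by
      have := (tendsto_cexp_zero hy).const_add (1 : ℂ)
      simpa using this
    have hlog : Tendsto (fun t : ℝ ↦ Complex.log (1 + Complex.exp (-(y * t)))) atTop (𝓝 0) := by
      have hc := (continuousAt_clog Complex.one_mem_slitPlane).tendsto
      have := hc.comp h0
      simpa [Complex.log_one, Function.comp_def] using this
    simpa using (hlog.neg).div_const y
  rw [integral_Ioi_of_hasDerivAt_of_tendsto' hd (integrableOn_v y hy) ht]
  have : ((0:ℝ) : ℂ) = 0 := by norm_num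
  simp only [Complex.ofReal_zero, mul_zero, neg_zero, Complex.exp_zero]
  have h2 : (1 : ℂ) + 1 = ((2:ℝ) : ℂ) := by norm_num
  rw [h2, ← Complex.ofReal_log (by norm_num : (0:ℝ) ≤ 2)]
  ring


/-! ### Geometric series pairing -/

lemma summable_halfpair_norm {w : ℂ} (hw : ‖w‖ < 1) :
    Summable fun n : ℕ ↦ ‖w ^ (2*n+1) - w ^ (2*n+2)‖ := by
  have hw2 : ‖w ^ 2‖ < 1 := by
    rw [norm_pow]; nlinarith [norm_nonneg w]
  have hfe : (fun n : ℕ ↦ ‖w ^ (2*n+1) - w ^ (2*n+2)‖)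
      = fun n : ℕ ↦ ‖w - w ^ 2‖ * ‖w ^ 2‖ ^ n := by
    funext n
    rw [show w ^ (2*n+1) - w ^ (2*n+2) = (w - w ^ 2) * (w ^ 2) ^ n by ring, norm_mul, norm_pow]
  rw [hfe]
  exact (summable_geometric_of_lt_one (norm_nonneg _) hw2).mul_left _

lemma tsum_halfpair {w : ℂ} (hw : ‖w‖ < 1) :
    ∑' n : ℕ, (w ^ (2*n+1) - w ^ (2*n+2)) = w * (1 + w)⁻¹ := by
  have hw2 : ‖w ^ 2‖ < 1 := by
    rw [norm_pow]; nlinarith [norm_nonneg w]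
  have h1 : (1 : ℂ) - w ≠ 0 := by
    intro h
    have : w = 1 := by linear_combination -h
    rw [this] at hw; simp at hw
  have h2 : (1 : ℂ) + w ≠ 0 := by
    intro h
    have : w = -1 := by linear_combination h
    rw [this] at hw; simp at hw
  have h3 : (1 : ℂ) - w ^ 2 ≠ 0 := by
    rw [show (1:ℂ) - w ^ 2 = (1 - w) * (1 + w) by ring]
    exact mul_ne_zero h1 h2
  calc ∑' n : ℕ, (w ^ (2*n+1) - w ^ (2*n+2))
      = ∑' n : ℕ, (w - w ^ 2) * (w ^ 2) ^ n := by
        refine tsum_congr fun n => ?_; ring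
    _ = (w - w ^ 2) * ∑' n : ℕ, (w ^ 2) ^ n := tsum_mul_left
    _ = (w - w ^ 2) * (1 - w ^ 2)⁻¹ := by rw [tsum_geometric_of_norm_lt_one hw2]
    _ = w * (1 + w)⁻¹ := by
        field_simp
        ring

/-! ### The double series terms -/

noncomputable def T (y : ℂ) (p : ℕ × ℕ) : ℂ :=
  (((2*p.1+1 : ℕ) : ℂ) + ((2*p.2+1 : ℕ) : ℂ) * y)⁻¹
  - (((2*p.1+1 : ℕ) : ℂ) + ((2*p.2+2 : ℕ) : ℂ) * y)⁻¹
  - (((2*p.1+2 : ℕ) : ℂ) + ((2*p.2+1 : ℕ) : ℂ) * y)⁻¹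
  + (((2*p.1+2 : ℕ) : ℂ) + ((2*p.2+2 : ℕ) : ℂ) * y)⁻¹

noncomputable def Fkj (y : ℂ) (p : ℕ × ℕ) (t : ℝ) : ℂ :=
  (Complex.exp (-(t:ℂ)) ^ (2*p.1+1) - Complex.exp (-(t:ℂ)) ^ (2*p.1+2)) *
  (Complex.exp (-(y*t)) ^ (2*p.2+1) - Complex.exp (-(y*t)) ^ (2*p.2+2))

lemma bridge (m n : ℕ) (y : ℂ) (t : ℝ) :
    Complex.exp (-(t:ℂ)) ^ m * Complex.exp (-(y*t)) ^ n
      = Complex.exp (-(((m : ℂ) + n*y) * t)) := by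
  rw [← Complex.exp_nat_mul, ← Complex.exp_nat_mul, ← Complex.exp_add]
  congr 1
  push_cast
  ring

lemma Fkj_eq (y : ℂ) (p : ℕ × ℕ) (t : ℝ) :
    Fkj y p t =
      Complex.exp (-((((2*p.1+1 : ℕ) : ℂ) + ((2*p.2+1 : ℕ) : ℂ)*y) * t))
      - Complex.exp (-((((2*p.1+1 : ℕ) : ℂ) + ((2*p.2+2 : ℕ) : ℂ)*y) * t))
      - Complex.exp (-((((2*p.1+2 : ℕ) : ℂ) + ((2*p.2+1 : ℕ) : ℂ)*y) * t))
      + Complex.exp (-((((2*p.1+2 : ℕ) : ℂ) + ((2*p.2+2 : ℕ) : ℂ)*y) * t)) := by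
  obtain ⟨k, j⟩ := p
  have e1 := bridge (2*k+1) (2*j+1) y t
  have e2 := bridge (2*k+1) (2*j+2) y t
  have e3 := bridge (2*k+2) (2*j+1) y t
  have e4 := bridge (2*k+2) (2*j+2) y t
  calc Fkj y (k, j) t
      = Complex.exp (-(t:ℂ)) ^ (2*k+1) * Complex.exp (-(y*t)) ^ (2*j+1)
        - Complex.exp (-(t:ℂ)) ^ (2*k+1) * Complex.exp (-(y*t)) ^ (2*j+2)
        - Complex.exp (-(t:ℂ)) ^ (2*k+2) * Complex.exp (-(y*t)) ^ (2*j+1)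
        + Complex.exp (-(t:ℂ)) ^ (2*k+2) * Complex.exp (-(y*t)) ^ (2*j+2) := by
        simp only [Fkj]; ring
    _ = _ := by rw [e1, e2, e3, e4]

lemma repos (m n : ℕ) (hm : m ≠ 0) {y : ℂ} (hy : 0 < y.re) : 0 < ((m : ℂ) + n*y).re := by
  have h1 : ((m : ℂ) + n*y).re = (m : ℝ) + n * y.re := by
    simp [Complex.add_re, Complex.mul_re]
  rw [h1]
  have hm1 : (1 : ℝ) ≤ m := by exact_mod_cast Nat.one_le_iff_ne_zero.mpr hm
  have h2 : (0 : ℝ) ≤ (n : ℝ) * y.re := by positivity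
  linarith

lemma den_ne (m n : ℕ) (hm : m ≠ 0) {y : ℂ} (hy : 0 < y.re) : (m : ℂ) + n*y ≠ 0 := by
  intro h
  have := repos m n hm hy
  rw [h] at this
  simp at this

lemma integrable_Fkj (y : ℂ) (hy : 0 < y.re) (p : ℕ × ℕ) :
    IntegrableOn (Fkj y p) (Ioi 0) := by
  obtain ⟨k, j⟩ := p
  have h := fun (m n : ℕ) (hm : m ≠ 0) => integrableOn_cexp (repos m n hm hy)
  refine ((((h (2*k+1) (2*j+1) (by omega)).sub (h (2*k+1) (2*j+2) (by omega))).sub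
      (h (2*k+2) (2*j+1) (by omega))).add (h (2*k+2) (2*j+2) (by omega))).congr ?_
  exact ae_of_all _ fun t => (Fkj_eq y (k, j) t).symm

lemma integral_Fkj (y : ℂ) (hy : 0 < y.re) (p : ℕ × ℕ) :
    ∫ t in Ioi (0:ℝ), Fkj y p t = T y p := by
  obtain ⟨k, j⟩ := p
  rw [integral_congr_ae (ae_of_all _ fun t => Fkj_eq y (k, j) t)]
  dsimp only
  set c1 : ℂ := ((2*k+1 : ℕ) : ℂ) + ((2*j+1 : ℕ) : ℂ)*y with hc1
  set c2 : ℂ := ((2*k+1 : ℕ) : ℂ) + ((2*j+2 : ℕ) : ℂ)*y with hc2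
  set c3 : ℂ := ((2*k+2 : ℕ) : ℂ) + ((2*j+1 : ℕ) : ℂ)*y with hc3
  set c4 : ℂ := ((2*k+2 : ℕ) : ℂ) + ((2*j+2 : ℕ) : ℂ)*y with hc4
  have h1 : IntegrableOn (fun t : ℝ ↦ Complex.exp (-(c1*t))) (Ioi 0) :=
    integrableOn_cexp (repos (2*k+1) (2*j+1) (by omega) hy)
  have h2 : IntegrableOn (fun t : ℝ ↦ Complex.exp (-(c2*t))) (Ioi 0) :=
    integrableOn_cexp (repos (2*k+1) (2*j+2) (by omega) hy)
  have h3 : IntegrableOn (fun t : ℝ ↦ Complex.exp (-(c3*t))) (Ioi 0) :=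
    integrableOn_cexp (repos (2*k+2) (2*j+1) (by omega) hy)
  have h4 : IntegrableOn (fun t : ℝ ↦ Complex.exp (-(c4*t))) (Ioi 0) :=
    integrableOn_cexp (repos (2*k+2) (2*j+2) (by omega) hy)
  have h12 : IntegrableOn (fun t : ℝ ↦ Complex.exp (-(c1*t)) - Complex.exp (-(c2*t))) (Ioi 0) :=
    h1.sub h2
  have h123 : IntegrableOn
      (fun t : ℝ ↦ Complex.exp (-(c1*t)) - Complex.exp (-(c2*t)) - Complex.exp (-(c3*t)))
      (Ioi 0) := h12.sub h3
  have g1 : ∫ t in Ioi (0:ℝ), Complex.exp (-(c1*t)) = 1/c1 :=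
    integral_cexp (repos (2*k+1) (2*j+1) (by omega) hy)
  have g2 : ∫ t in Ioi (0:ℝ), Complex.exp (-(c2*t)) = 1/c2 :=
    integral_cexp (repos (2*k+1) (2*j+2) (by omega) hy)
  have g3 : ∫ t in Ioi (0:ℝ), Complex.exp (-(c3*t)) = 1/c3 :=
    integral_cexp (repos (2*k+2) (2*j+1) (by omega) hy)
  have g4 : ∫ t in Ioi (0:ℝ), Complex.exp (-(c4*t)) = 1/c4 :=
    integral_cexp (repos (2*k+2) (2*j+2) (by omega) hy)
  rw [integral_add h123 h4, integral_sub h12 h3, integral_sub h1 h2, g1, g2, g3, g4]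
  simp only [T, one_div]
  rfl

/-! ### Bounds for absolute convergence -/

lemma norm_one_sub_exp_le {c : ℂ} (hc : 0 ≤ c.re) {t : ℝ} (ht : 0 ≤ t) :
    ‖1 - Complex.exp (-(c*t))‖ ≤ 2 * ‖c‖ * t := by
  have hnt : ‖(-(c * (t:ℂ)))‖ = ‖c‖ * t := by
    rw [norm_neg, norm_mul, Complex.norm_real, Real.norm_of_nonneg ht]
  rcases le_or_gt (‖c‖ * t) 1 with h | h
  · have habs := Complex.norm_exp_sub_one_le (x := -(c*t))
      (by rw [hnt]; exact h)
    rw [norm_sub_rev]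
    calc ‖Complex.exp (-(c*t)) - 1‖ ≤ 2 * ‖(-(c*(t:ℂ)))‖ := habs
      _ = 2 * ‖c‖ * t := by rw [hnt]; ring
  · have hE : ‖Complex.exp (-(c*t))‖ ≤ 1 := by
      rw [norm_exp']
      calc Real.exp ((-(c*(t:ℂ))).re) ≤ Real.exp 0 := by
            apply Real.exp_le_exp.mpr
            rw [Complex.neg_re, re_mul_ofReal]
            have : 0 ≤ c.re * t := mul_nonneg hc ht
            linarith
        _ = 1 := Real.exp_zero
    calc ‖1 - Complex.exp (-(c*t))‖ ≤ ‖(1:ℂ)‖ + ‖Complex.exp (-(c*t))‖ := norm_sub_le _ _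
      _ ≤ 2 := by rw [norm_one]; linarith
      _ ≤ 2 * ‖c‖ * t := by nlinarith

lemma sq_le_exp (s : ℝ) (hs : 0 ≤ s) : s^2 ≤ 16 * Real.exp (s/2) := by
  have h := Real.add_one_le_exp (s/4)
  have h2 : Real.exp (s/2) = Real.exp (s/4) * Real.exp (s/4) := by
    rw [← Real.exp_add]; ring_nf
  nlinarith [mul_le_mul h h (by linarith : (0:ℝ) ≤ s/4 + 1) (Real.exp_nonneg (s/4))]

lemma norm_Fkj_le (y : ℂ) (hy : 0 < y.re) (p : ℕ × ℕ) {t : ℝ} (ht : 0 ≤ t) :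
    ‖Fkj y p t‖ ≤ 64*‖y‖/((2*p.1+1 : ℝ) + (2*p.2+1)*y.re)^2
        * Real.exp (-(((2*p.1+1 : ℝ) + (2*p.2+1)*y.re)/2 * t)) := by
  obtain ⟨k, j⟩ := p
  have ha : 0 < y.re := hy
  set u : ℝ := 2*k+1 with hu
  set v : ℝ := (2*(j:ℝ)+1)*y.re with hv
  have hu0 : 0 < u := by positivity
  have hv0 : 0 < v := by positivity
  have hw1 : ‖Complex.exp (-(t:ℂ)) ^ (2*k+1) - Complex.exp (-(t:ℂ)) ^ (2*k+2)‖
      ≤ Real.exp (u * (-t)) * (2*t) := by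
    rw [show Complex.exp (-(t:ℂ)) ^ (2*k+1) - Complex.exp (-(t:ℂ)) ^ (2*k+2)
        = Complex.exp (-(t:ℂ)) ^ (2*k+1) * (1 - Complex.exp (-(t:ℂ))) from by ring,
      norm_mul, norm_pow]
    have h2 : ‖Complex.exp (-(t:ℂ))‖ = Real.exp (-t) := by
      rw [norm_exp']; simp
    have h3 : ‖1 - Complex.exp (-(t:ℂ))‖ ≤ 2*t := by
      have := norm_one_sub_exp_le (c := 1) (by norm_num) ht
      simpa using this
    rw [h2, ← Real.exp_nat_mul]
    have h4 : ((2*k+1 : ℕ) : ℝ) * (-t) = u * (-t) := by rw [hu]; push_cast; ring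
    rw [h4]
    exact mul_le_mul_of_nonneg_left h3 (Real.exp_nonneg _)
  have hw2 : ‖Complex.exp (-(y*t)) ^ (2*j+1) - Complex.exp (-(y*t)) ^ (2*j+2)‖
      ≤ Real.exp (v * (-t)) * (2*‖y‖*t) := by
    rw [show Complex.exp (-(y*(t:ℂ))) ^ (2*j+1) - Complex.exp (-(y*t)) ^ (2*j+2)
        = Complex.exp (-(y*t)) ^ (2*j+1) * (1 - Complex.exp (-(y*t))) from by ring,
      norm_mul, norm_pow]
    have h2 : ‖Complex.exp (-(y*(t:ℂ)))‖ = Real.exp (-(y.re*t)) := by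
      rw [norm_exp', Complex.neg_re, re_mul_ofReal]
    have h3 := norm_one_sub_exp_le hy.le ht
    rw [h2, ← Real.exp_nat_mul]
    have h4 : ((2*j+1 : ℕ) : ℝ) * (-(y.re*t)) = v * (-t) := by rw [hv]; push_cast; ring
    rw [h4]
    exact mul_le_mul_of_nonneg_left (by linarith) (Real.exp_nonneg _)
  have hstep : ‖Fkj y (k, j) t‖
      ≤ (Real.exp (u * (-t)) * (2*t)) * (Real.exp (v * (-t)) * (2*‖y‖*t)) := by
    rw [Fkj, norm_mul]
    exact mul_le_mul hw1 hw2 (norm_nonneg _) (by positivity)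
  have hprod : Real.exp (u * (-t)) * Real.exp (v * (-t)) = Real.exp (-((u+v)*t)) := by
    rw [← Real.exp_add]; ring_nf
  have hEq : (Real.exp (u * (-t)) * (2*t)) * (Real.exp (v * (-t)) * (2*‖y‖*t))
      = 4*‖y‖ * t^2 * Real.exp (-((u+v)*t)) := by
    rw [← hprod]; ring
  rw [hEq] at hstep
  refine hstep.trans ?_
  have hcc : ((2*(k:ℝ)+1) + (2*(j:ℝ)+1)*y.re) = u + v := by rw [hu, hv]
  rw [hcc]
  have hc0 : 0 < u + v := by linarith
  have hsq := sq_le_exp ((u+v)*t) (by positivity)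
  have hEs : Real.exp (-((u+v)*t)) * Real.exp ((u+v)*t/2) = Real.exp (-((u+v)/2*t)) := by
    rw [← Real.exp_add]; ring_nf
  rw [div_mul_eq_mul_div, le_div_iff₀ (by positivity)]
  calc 4*‖y‖ * t^2 * Real.exp (-((u+v)*t)) * ((u+v))^2
      = 4*‖y‖ * (((u+v)*t)^2 * Real.exp (-((u+v)*t))) := by ring
    _ ≤ 4*‖y‖ * ((16 * Real.exp ((u+v)*t/2)) * Real.exp (-((u+v)*t))) := by
        apply mul_le_mul_of_nonneg_left _ (by positivity)
        exact mul_le_mul_of_nonneg_right hsq (Real.exp_nonneg _)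
    _ = 64*‖y‖ * (Real.exp (-((u+v)*t)) * Real.exp ((u+v)*t/2)) := by ring
    _ = 64*‖y‖ * Real.exp (-((u+v)/2*t)) := by rw [hEs]

lemma integral_norm_Fkj_le (y : ℂ) (hy : 0 < y.re) (p : ℕ × ℕ) :
    ∫ t in Ioi (0:ℝ), ‖Fkj y p t‖
      ≤ 64*‖y‖/((2*p.1+1 : ℝ) + (2*p.2+1)*y.re)^2
          * (2/((2*p.1+1 : ℝ) + (2*p.2+1)*y.re)) := by
  set c : ℝ := (2*p.1+1 : ℝ) + (2*p.2+1)*y.re with hcdef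
  have hc0 : 0 < c := by positivity
  have hint1 : IntegrableOn (fun t : ℝ ↦ ‖Fkj y p t‖) (Ioi 0) := (integrable_Fkj y hy p).norm
  have hint2 : IntegrableOn (fun t : ℝ ↦ 64*‖y‖/c^2 * Real.exp (-(c/2 * t))) (Ioi 0) := by
    have := (exp_neg_integrableOn_Ioi 0 (show (0:ℝ) < c/2 by positivity)).const_mul (64*‖y‖/c^2)
    simpa [neg_mul, IntegrableOn] using this
  have hmono := setIntegral_mono_on hint1 hint2 measurableSet_Ioi
    (fun t ht => norm_Fkj_le y hy p (le_of_lt ht))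
  refine hmono.trans ?_
  rw [MeasureTheory.integral_const_mul, integral_rexp (show (0:ℝ) < c/2 by positivity)]
  apply le_of_eq
  congr 1
  field_simp

lemma summable_aux : Summable fun n : ℕ ↦ (Real.sqrt (2*n+1) ^ 3)⁻¹ := by
  have base : Summable fun n : ℕ ↦ ((n : ℝ) ^ ((3:ℝ)/2))⁻¹ :=
    Real.summable_nat_rpow_inv.mpr (by norm_num)
  have sh : Summable fun n : ℕ ↦ (((n+1 : ℕ) : ℝ) ^ ((3:ℝ)/2))⁻¹ :=
    (summable_nat_add_iff 1).mpr base
  refine Summable.of_nonneg_of_le (fun n => by positivity) (fun n => ?_) sh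
  have hz : (0:ℝ) ≤ (n:ℝ)+1 := by positivity
  have h1 : Real.sqrt ((n:ℝ)+1) ^ 3 = (((n+1 : ℕ) : ℝ)) ^ ((3:ℝ)/2) := by
    push_cast
    rw [Real.sqrt_eq_rpow, ← Real.rpow_natCast (((n:ℝ)+1) ^ ((1:ℝ)/2)) 3, ← Real.rpow_mul hz]
    norm_num
  rw [← h1]
  have h2 : Real.sqrt ((n:ℝ)+1) ^ 3 ≤ Real.sqrt (2*(n:ℝ)+1) ^ 3 := by
    apply pow_le_pow_left₀ (Real.sqrt_nonneg _)
    apply Real.sqrt_le_sqrt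
    linarith
  have h3 : (0:ℝ) < Real.sqrt ((n:ℝ)+1) ^ 3 := by
    have : (0:ℝ) < Real.sqrt ((n:ℝ)+1) := Real.sqrt_pos.mpr (by positivity)
    positivity
  exact inv_anti₀ h3 h2

lemma summable_integral_norm_Fkj (y : ℂ) (hy : 0 < y.re) :
    Summable fun p : ℕ × ℕ ↦ ∫ t in Ioi (0:ℝ), ‖Fkj y p t‖ := by
  set a := y.re with hadef
  have ha : 0 < a := hy
  set K : ℝ := 16*‖y‖/(Real.sqrt a ^ 3) with hK
  set φ : ℕ → ℝ := fun n ↦ (Real.sqrt (2*n+1) ^ 3)⁻¹ with hφ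
  have hφs : Summable φ := summable_aux
  have hmaj : Summable fun p : ℕ × ℕ ↦ K * (φ p.1 * φ p.2) :=
    (hφs.mul_of_nonneg hφs (fun n => by positivity) (fun n => by positivity)).mul_left K
  refine Summable.of_nonneg_of_le (fun p => integral_nonneg fun t => norm_nonneg _)
    (fun p => ?_) hmaj
  refine (integral_norm_Fkj_le y hy p).trans ?_
  obtain ⟨k, j⟩ := p
  set u : ℝ := 2*(k:ℝ)+1 with hudef
  set w : ℝ := 2*(j:ℝ)+1 with hwdef
  have hu0 : 0 < u := by positivity
  have hw0 : 0 < w := by positivity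
  have hc0 : 0 < u + w*a := by positivity
  have hsu : 0 < Real.sqrt u := Real.sqrt_pos.mpr hu0
  have hsw : 0 < Real.sqrt w := Real.sqrt_pos.mpr hw0
  have hsa : 0 < Real.sqrt a := Real.sqrt_pos.mpr ha
  have h1 : 2*(Real.sqrt u * (Real.sqrt w * Real.sqrt a)) ≤ u + w*a := by
    have e1 := Real.sq_sqrt hu0.le
    have e2 := Real.sq_sqrt hw0.le
    have e3 := Real.sq_sqrt ha.le
    nlinarith [sq_nonneg (Real.sqrt u - Real.sqrt w * Real.sqrt a)]
  have h2 : (2*(Real.sqrt u * (Real.sqrt w * Real.sqrt a)))^3 ≤ (u + w*a)^3 :=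
    pow_le_pow_left₀ (by positivity) h1 3
  have h3 : 8 * (Real.sqrt u ^3 * Real.sqrt w ^3 * Real.sqrt a ^3) ≤ (u + w*a)^3 := by
    nlinarith [h2]
  have hD : 0 < Real.sqrt u ^3 * Real.sqrt w ^3 * Real.sqrt a ^3 := by positivity
  have key : 64*‖y‖/(u + w*a)^2 * (2/(u + w*a)) = 128*‖y‖/(u + w*a)^3 := by
    field_simp
    ring
  have hgoal : (128:ℝ)*‖y‖/(u + w*a)^3
      ≤ 128*‖y‖/(8 * (Real.sqrt u ^3 * Real.sqrt w ^3 * Real.sqrt a ^3)) := by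
    apply div_le_div_of_nonneg_left (by positivity) (by positivity) h3
  have hfin : (128:ℝ)*‖y‖/(8 * (Real.sqrt u ^3 * Real.sqrt w ^3 * Real.sqrt a ^3))
      = K * (φ k * φ j) := by
    rw [hK, hφ]
    simp only [hudef, hwdef]
    push_cast
    field_simp
    ring
  calc 64*‖y‖/((2*(k:ℕ)+1 : ℝ) + (2*(j:ℕ)+1)*y.re)^2
        * (2/((2*(k:ℕ)+1 : ℝ) + (2*(j:ℕ)+1)*y.re))
      = 64*‖y‖/(u + w*a)^2 * (2/(u + w*a)) := by simp only [hudef, hwdef, hadef]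
    _ = 128*‖y‖/(u + w*a)^3 := key
    _ ≤ 128*‖y‖/(8 * (Real.sqrt u ^3 * Real.sqrt w ^3 * Real.sqrt a ^3)) := hgoal
    _ = K * (φ k * φ j) := hfin

/-! ### The series expansion of the cross integral -/

lemma Cser (y : ℂ) (hy : 0 < y.re) :
    ∫ t in Ioi (0:ℝ), ((1 + Complex.exp (t:ℂ))⁻¹ * (1 + Complex.exp (y*t))⁻¹)
      = ∑' p : ℕ × ℕ, T y p := by
  have h1 : ∀ t ∈ Ioi (0:ℝ),
      (1 + Complex.exp (t:ℂ))⁻¹ * (1 + Complex.exp (y*t))⁻¹ = ∑' p : ℕ × ℕ, Fkj y p t := by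
    intro t ht
    have ht0 : (0:ℝ) < t := ht
    have hw1 : ‖Complex.exp (-(t:ℂ))‖ < 1 := by
      rw [norm_exp']; simp only [Complex.neg_re, Complex.ofReal_re]
      rw [Real.exp_lt_one_iff]; linarith
    have hw2 : ‖Complex.exp (-(y*(t:ℂ)))‖ < 1 := by
      rw [norm_exp', Complex.neg_re, re_mul_ofReal, Real.exp_lt_one_iff]
      have : 0 < y.re * t := by positivity
      linarith
    rw [inv_one_add_exp_eq (one_add_exp_real_ne t) (one_add_exp_neg_real_ne t),
      inv_one_add_exp_eq (one_add_exp_mul_ne y hy ht0.le) (one_add_exp_neg_mul_ne y hy ht0.le),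
      ← tsum_halfpair hw1, ← tsum_halfpair hw2,
      tsum_mul_tsum_of_summable_norm (summable_halfpair_norm hw1) (summable_halfpair_norm hw2)]
    rfl
  rw [setIntegral_congr_fun measurableSet_Ioi (fun t ht => h1 t ht)]
  rw [← MeasureTheory.integral_tsum_of_summable_integral_norm
    (fun p => integrable_Fkj y hy p) (summable_integral_norm_Fkj y hy)]
  exact tsum_congr fun p => integral_Fkj y hy p

/-! ### Symmetry of the double series -/

lemma hterm {x : ℂ} (hx0 : x ≠ 0) (m n : ℕ) :
    x⁻¹ * ((m : ℂ) + (n : ℂ)*x⁻¹)⁻¹ = ((n : ℂ) + (m : ℂ)*x)⁻¹ := by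
  rw [show ((n : ℂ) + (m : ℂ)*x) = (((m : ℂ) + (n : ℂ)*x⁻¹)*x) from by field_simp; ring,
    mul_inv_rev]

lemma Csymm (x : ℂ) (hx : 0 < x.re) :
    x⁻¹ * ∑' p : ℕ × ℕ, T x⁻¹ p = ∑' p : ℕ × ℕ, T x p := by
  have hx0 : x ≠ 0 := fun h => by simp [h] at hx
  rw [← tsum_mul_left]
  have h1 : ∀ p : ℕ × ℕ, x⁻¹ * T x⁻¹ p = T x p.swap := by
    rintro ⟨k, j⟩
    simp only [T, mul_sub, mul_add, Prod.swap, Prod.fst, Prod.snd]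
    rw [hterm hx0 (2*k+1) (2*j+1), hterm hx0 (2*k+1) (2*j+2),
      hterm hx0 (2*k+2) (2*j+1), hterm hx0 (2*k+2) (2*j+2)]
    ring
  rw [tsum_congr h1]
  exact (Equiv.prodComm ℕ ℕ).tsum_eq (T x)

/-! ### Evaluation of `J1` -/

lemma integrableOn_tau_v (y : ℂ) (hy : 0 < y.re) :
    IntegrableOn (fun t : ℝ ↦ (1 + Complex.exp (t:ℂ))⁻¹ * (1 + Complex.exp (y*t))⁻¹) (Ioi 0) := by
  refine Integrable.mono' ((integrableOn_v y hy).norm) ?_ ?_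
  · have c1 : ContinuousOn (fun t : ℝ ↦ (1 + Complex.exp (t:ℂ))⁻¹) (Ioi 0) :=
      ContinuousOn.inv₀
        ((continuous_const.add (Complex.continuous_exp.comp Complex.continuous_ofReal)).continuousOn)
        (fun t _ => one_add_exp_real_ne t)
    exact ((c1.mul ((continuousOn_v y hy).mono Ioi_subset_Ici_self)).aestronglyMeasurable
      measurableSet_Ioi)
  · filter_upwards [ae_restrict_mem measurableSet_Ioi] with t _
    have hτ : ‖(1 + Complex.exp (t:ℂ))⁻¹‖ ≤ 1 := by
      rw [norm_inv]
      have h2 : (1:ℝ) ≤ ‖1 + Complex.exp (t:ℂ)‖ := by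
        rw [← Complex.ofReal_exp, ← Complex.ofReal_one, ← Complex.ofReal_add,
          Complex.norm_real, Real.norm_of_nonneg (by positivity)]
        nlinarith [Real.exp_pos t]
      have h3 : (0:ℝ) < ‖1 + Complex.exp (t:ℂ)‖ := lt_of_lt_of_le one_pos h2
      calc ‖1 + Complex.exp (t:ℂ)‖⁻¹ ≤ 1⁻¹ := by apply inv_anti₀ one_pos h2
        _ = 1 := inv_one
    rw [norm_mul]
    calc ‖(1 + Complex.exp (t:ℂ))⁻¹‖ * ‖(1 + Complex.exp (y*t))⁻¹‖
        ≤ 1 * ‖(1 + Complex.exp (y*t))⁻¹‖ :=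
          mul_le_mul_of_nonneg_right hτ (norm_nonneg _)
      _ = ‖(1 + Complex.exp (y*t))⁻¹‖ := one_mul _

lemma J1_eq (y : ℂ) (hy : 0 < y.re) :
    J1 y = (Real.log 2 : ℂ)/y - ∑' p : ℕ × ℕ, T y p := by
  have h1 : ∀ t ∈ Ioi (0:ℝ),
      (1:ℂ) / ((1 + Complex.exp (-(t:ℂ))) * (1 + Complex.exp (y*t)))
        = (1 + Complex.exp (y*t))⁻¹
          - (1 + Complex.exp (t:ℂ))⁻¹ * (1 + Complex.exp (y*t))⁻¹ := by
    intro t ht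
    have ht0 : (0:ℝ) < t := ht
    have hA := one_add_exp_neg_real_ne t
    have hC := one_add_exp_real_ne t
    have key : (1 + Complex.exp (-(t:ℂ)))⁻¹ = 1 - (1 + Complex.exp (t:ℂ))⁻¹ := by
      have h := inv_one_add_exp_eq (z := -(t:ℂ)) hA (by rwa [neg_neg])
      rw [neg_neg] at h
      rw [h, eq_sub_iff_add_eq,
        show Complex.exp (t:ℂ) * (1 + Complex.exp (t:ℂ))⁻¹ + (1 + Complex.exp (t:ℂ))⁻¹
          = (1 + Complex.exp (t:ℂ)) * (1 + Complex.exp (t:ℂ))⁻¹ from by ring,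
        mul_inv_cancel₀ hC]
    rw [one_div, mul_inv, key]
    ring
  rw [J1, setIntegral_congr_fun measurableSet_Ioi (fun t ht => h1 t ht),
    integral_sub (integrableOn_v y hy) (integrableOn_tau_v y hy),
    integral_v y hy, Cser y hy]

end J1FE

theorem J1_two_term_functional_equation (x : ℂ) (hx : 0 < x.re) :
    (J1 x + Real.log 2) - (1 / x) * (J1 (1 / x) + Real.log 2) = 0 := by
  have hx0 : x ≠ 0 := fun h => by simp [h] at hx
  have hxi : 0 < (x⁻¹).re := by
    rw [Complex.inv_re]
    exact div_pos hx (Complex.normSq_pos.mpr hx0)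
  have h1 := J1FE.J1_eq x hx
  have h2 := J1FE.J1_eq x⁻¹ hxi
  have h3 := J1FE.Csymm x hx
  rw [one_div, h1, h2, ← h3]
  field_simp
  ring
end

section
/- For Re(s) > 2 and x > 0, the function A(x,s) := ∫₀^∞ t^{s−1}/((e^{xt}−1)(e^t−1)) dt satisfies A(x,s) = x^{1−s}Γ(s−1)ζ(s−1) − (1/2)x^{−s}Γ(s)ζ(s) + ∫₀^∞ (1/(e^t−1) − 1/t + 1/2)·t^{s−1}/(e^{xt}−1) dt. -/
open MeasureTheory Set Real Complex

lemma exp_sub_one_bound (u : ℝ) (hu : 0 < u) : 1 / (rexp u - 1) ≤ (1/u) * rexp (-(u/2)) := by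
  have e1 : rexp (u/2) * rexp (u/2) = rexp u := by
    rw [← Real.exp_add]; ring_nf
  have e2 : rexp (-(u/2)) * rexp (u/2) = 1 := by
    rw [← Real.exp_add]; simp
  have h : u * rexp (u/2) ≤ rexp u - 1 := by
    have := Real.self_le_sinh_iff.mpr (by positivity : (0:ℝ) ≤ u/2)
    rw [Real.sinh_eq] at this
    nlinarith [Real.exp_pos (u/2), Real.exp_pos (-(u/2)),
      mul_comm (rexp (-(u/2))) (rexp (u/2))]
  have h2 : 0 < u * rexp (u/2) := by positivity
  rw [div_le_iff₀ (by linarith)]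
  calc (1:ℝ) = (rexp (-(u/2)) * rexp (u/2)) * (u * (1/u)) := by
        rw [e2, mul_one_div_cancel hu.ne']; ring
    _ = (1/u * rexp (-(u/2))) * (u * rexp (u/2)) := by ring
    _ ≤ (1/u * rexp (-(u/2))) * (rexp u - 1) := by gcongr

-- norm computation
lemma norm_bose (z : ℂ) (x t : ℝ) (hx : 0 < x) (ht : 0 < t) :
    ‖(t : ℂ) ^ (z - 1) / (Complex.exp (x * t) - 1)‖
      = t ^ (z.re - 1) / (rexp (x * t) - 1) := by
  have hxt : (0:ℝ) < x * t := by positivity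
  have h1 : (1:ℝ) < rexp (x * t) := by
    rw [← Real.exp_zero]; exact Real.exp_lt_exp.mpr hxt
  rw [norm_div, Complex.norm_cpow_eq_rpow_re_of_pos ht, sub_re, one_re]
  congr 1
  rw [show ((x:ℂ) * t) = ((x * t : ℝ) : ℂ) by push_cast; ring, ← Complex.ofReal_exp,
    ← Complex.ofReal_one, ← Complex.ofReal_sub, Complex.norm_real,
    Real.norm_of_nonneg (by linarith)]

lemma integrable_bose (z : ℂ) (hz : 1 < z.re) (x : ℝ) (hx : 0 < x) :
    IntegrableOn (fun t : ℝ ↦ (t : ℂ) ^ (z - 1) / (Complex.exp (x * t) - 1)) (Ioi 0) := by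
  have hmeas : AEStronglyMeasurable
      (fun t : ℝ ↦ (t : ℂ) ^ (z - 1) / (Complex.exp (x * t) - 1))
      (volume.restrict (Ioi 0)) := by
    apply Measurable.aestronglyMeasurable
    fun_prop
  have hcomp : IntegrableOn (fun t : ℝ ↦ (1/x) * (t ^ (z.re - 2) * rexp (-(x/2) * t))) (Ioi 0) := by
    apply Integrable.const_mul
    have := integrableOn_rpow_mul_exp_neg_mul_rpow (p := 1) (s := z.re - 2) (b := x/2)
      (by linarith) one_pos (by positivity)
    refine this.congr_fun (fun t ht ↦ ?_) measurableSet_Ioi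
    simp only [Real.rpow_one]
  refine Integrable.mono hcomp hmeas (ae_restrict_iff' measurableSet_Ioi |>.mpr
    (ae_of_all _ (fun t ht ↦ ?_)))
  have ht0 : (0:ℝ) < t := ht
  rw [norm_bose z x t hx ht0]
  have hxt : (0:ℝ) < x * t := mul_pos hx ht0
  have h1 : (1:ℝ) < rexp (x * t) := by
    rw [← Real.exp_zero]; exact Real.exp_lt_exp.mpr hxt
  have hb := exp_sub_one_bound (x * t) hxt
  calc t ^ (z.re - 1) / (rexp (x * t) - 1)
      = t ^ (z.re - 1) * (1 / (rexp (x * t) - 1)) := by rw [mul_one_div]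
    _ ≤ t ^ (z.re - 1) * ((1/(x*t)) * rexp (-((x*t)/2))) := by
        gcongr
    _ = (1/x) * (t ^ (z.re - 2) * rexp (-(x/2) * t)) := by
        rw [show z.re - 1 = (z.re - 2) + 1 by ring, Real.rpow_add ht0, Real.rpow_one]
        rw [show -((x*t)/2) = -(x/2) * t by ring]
        field_simp
    _ ≤ ‖(1/x) * (t ^ (z.re - 2) * rexp (-(x/2) * t))‖ := le_abs_self _

open MeasureTheory Set Real Complex

lemma bose_value (z : ℂ) (hz : 1 < z.re) (x : ℝ) (hx : 0 < x) :
    (∫ t in Ioi (0:ℝ), (t : ℂ) ^ (z - 1) / (Complex.exp (x * t) - 1))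
      = (x : ℂ) ^ (-z) * Complex.Gamma z * riemannZeta z := by
  have hz0 : 0 < z.re := by linarith
  set a : ℕ → ℂ := fun n ↦ if n = 0 then 0 else 1 with ha
  set p : ℕ → ℝ := fun n ↦ n * x with hp
  set F : ℝ → ℂ := fun t ↦ 1 / (Complex.exp (x * t) - 1) with hF
  have hap : ∀ n, a n = 0 ∨ 0 < p n := by
    intro n
    rcases Nat.eq_zero_or_pos n with h | h
    · left; simp [ha, h]
    · right; simp only [hp]; positivity
  have hFsum : ∀ t ∈ Ioi (0:ℝ), HasSum (fun n : ℕ ↦ a n * rexp (-p n * t)) (F t) := by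
    intro t ht
    have ht0 : (0:ℝ) < t := ht
    have hxt : (0:ℝ) < x * t := mul_pos hx ht0
    set r : ℝ := rexp (-(x * t)) with hr
    have hr1 : r < 1 := by
      rw [hr, ← Real.exp_zero]; exact Real.exp_lt_exp.mpr (by linarith)
    have hr0 : 0 < r := Real.exp_pos _
    have hrc : ‖(r : ℂ)‖ < 1 := by rwa [Complex.norm_real, Real.norm_of_nonneg hr0.le]
    have hgeom : HasSum (fun n : ℕ ↦ (r:ℂ) ^ n) (1 / (1 - r)) := by
      simpa [one_div] using hasSum_geometric_of_norm_lt_one hrc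
    have hone : HasSum (fun n : ℕ ↦ if n = 0 then (1:ℂ) else 0) 1 := hasSum_ite_eq 0 1
    have hsub := hgeom.sub hone
    have heq : (fun n : ℕ ↦ (r:ℂ) ^ n - (if n = 0 then 1 else 0))
        = fun n : ℕ ↦ a n * rexp (-p n * t) := by
      funext n
      rcases Nat.eq_zero_or_pos n with h | h
      · simp [h, ha]
      · have hne : n ≠ 0 := h.ne'
        simp only [ha, hp, if_neg hne, sub_zero, one_mul]
        rw [hr, ← Complex.ofReal_pow, ← Real.exp_nat_mul]
        norm_cast
        congr 1
        ring
    rw [heq] at hsub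
    convert hsub using 1
    · rfl
    -- F t = 1/(1-r) - 1
    have hex : rexp (x * t) ≠ 1 := by
      rw [← Real.exp_zero]; exact fun h ↦ by
        have := Real.exp_injective h; linarith
    have h1r : (1:ℝ) - r ≠ 0 := by linarith
    have hrr : r * rexp (x * t) = 1 := by
      rw [hr, ← Real.exp_add]; simp
    show (1:ℂ) / (Complex.exp (↑x * ↑t) - 1) = 1 / (1 - (r:ℂ)) - 1
    have hce : Complex.exp (↑x * ↑t) = ((rexp (x*t) : ℝ) : ℂ) := by
      rw [Complex.ofReal_exp]; push_cast; ring_nf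
    rw [hce, show ((1:ℂ)/(1 - (r:ℂ)) - 1) = ((1/(1-r) - 1 : ℝ) : ℂ) by push_cast; ring]
    norm_cast
    have : rexp (x * t) - 1 ≠ 0 := sub_ne_zero.mpr hex
    field_simp
    nlinarith [hrr]
  have hsum : Summable fun n : ℕ ↦ ‖a n‖ / (p n) ^ z.re := by
    have hbase : Summable (fun n : ℕ ↦ 1 / (n:ℝ) ^ z.re) :=
      Real.summable_one_div_nat_rpow.mpr hz
    refine Summable.of_nonneg_of_le (fun n ↦ by positivity) (fun n ↦ ?_)
      (hbase.mul_left ((x ^ z.re)⁻¹))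
    rcases Nat.eq_zero_or_pos n with h | h
    · simp [ha, h]
      positivity
    · have hn0 : (0:ℝ) < n := by exact_mod_cast h
      simp only [ha, hp, if_neg h.ne', norm_one]
      rw [Real.mul_rpow hn0.le hx.le]
      rw [one_div, mul_inv, one_div]
      exact le_of_eq (by ring)
  have hmain := hasSum_mellin hap hz0 hFsum hsum
  have htsum := hmain.tsum_eq
  have hz_ne : z ≠ 0 := fun h ↦ by rw [h] at hz0; simp at hz0
  have hterm : ∀ n : ℕ, Complex.Gamma z * a n / (p n : ℂ) ^ z
      = Complex.Gamma z * (x:ℂ)^(-z) * (1 / (n:ℂ) ^ z) := by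
    intro n
    rcases Nat.eq_zero_or_pos n with h | h
    · simp [ha, hp, h, Complex.zero_cpow hz_ne]
    · have hn0 : (0:ℝ) < n := by exact_mod_cast h
      simp only [ha, hp, if_neg h.ne']
      rw [show (((n:ℝ) * x : ℝ) : ℂ) = (((n:ℝ) : ℝ) : ℂ) * ((x:ℝ):ℂ) by push_cast; ring]
      rw [Complex.mul_cpow_ofReal_nonneg hn0.le hx.le, Complex.cpow_neg]
      push_cast
      field_simp
  have hzeta : riemannZeta z = ∑' n : ℕ, 1 / (n:ℂ) ^ z := zeta_eq_tsum_one_div_nat_cpow hz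
  have hmel : mellin F z = (x : ℂ) ^ (-z) * Complex.Gamma z * riemannZeta z := by
    rw [← htsum, tsum_congr hterm, tsum_mul_left, ← hzeta]; ring
  rw [← hmel, mellin]
  refine setIntegral_congr_fun measurableSet_Ioi (fun t ht ↦ ?_)
  show (t:ℂ) ^ (z-1) / (Complex.exp (↑x * ↑t) - 1) = (t:ℂ)^(z-1) • F t
  rw [hF, smul_eq_mul, mul_one_div]
theorem A_integral_decomposition (x : ℝ) (hx : 0 < x) (s : ℂ) (hs : 2 < s.re) :
    (∫ t in Set.Ioi (0 : ℝ),
        (t : ℂ) ^ (s - 1) / ((Complex.exp (x * t) - 1) * (Complex.exp t - 1))) =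
      (x : ℂ) ^ (1 - s) * Complex.Gamma (s - 1) * riemannZeta (s - 1) -
        (1 / 2) * (x : ℂ) ^ (-s) * Complex.Gamma s * riemannZeta s +
        ∫ t in Set.Ioi (0 : ℝ),
          (1 / (Complex.exp t - 1) - 1 / (t : ℂ) + 1 / 2) *
            ((t : ℂ) ^ (s - 1) / (Complex.exp (x * t) - 1)) := by
  set f : ℝ → ℂ := fun t ↦ (t : ℂ) ^ (s - 1) / ((Complex.exp (x * t) - 1) * (Complex.exp t - 1))
    with hf
  set h₁ : ℝ → ℂ := fun t ↦ (t : ℂ) ^ ((s - 1) - 1) / (Complex.exp (x * t) - 1) with hh₁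
  set h₂ : ℝ → ℂ := fun t ↦ (t : ℂ) ^ (s - 1) / (Complex.exp (x * t) - 1) with hh₂
  set g : ℝ → ℂ := fun t ↦ (1 / (Complex.exp t - 1) - 1 / (t : ℂ) + 1 / 2) *
      ((t : ℂ) ^ (s - 1) / (Complex.exp (x * t) - 1)) with hg
  have hs1 : 1 < (s - 1).re := by simp [Complex.sub_re]; linarith
  have hs' : 1 < s.re := by linarith
  have hint₁ : IntegrableOn h₁ (Set.Ioi 0) := integrable_bose (s - 1) hs1 x hx
  have hint₂ : IntegrableOn h₂ (Set.Ioi 0) := integrable_bose s hs' x hx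
  -- integrability of f by comparison with h₁
  have hintf : IntegrableOn f (Set.Ioi 0) := by
    have hmeas : AEStronglyMeasurable f (volume.restrict (Set.Ioi 0)) := by
      apply Measurable.aestronglyMeasurable
      fun_prop
    refine Integrable.mono hint₁ hmeas (ae_restrict_iff' measurableSet_Ioi |>.mpr
      (ae_of_all _ (fun t ht ↦ ?_)))
    have ht0 : (0:ℝ) < t := ht
    have hxt : (0:ℝ) < x * t := mul_pos hx ht0
    have het : (1:ℝ) < rexp t := by
      rw [← Real.exp_zero]; exact Real.exp_lt_exp.mpr ht0
    have hext : (1:ℝ) < rexp (x * t) := by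
      rw [← Real.exp_zero]; exact Real.exp_lt_exp.mpr hxt
    have hle : t ≤ rexp t - 1 := by linarith [Real.add_one_le_exp t]
    have hce : Complex.exp (↑t : ℂ) = ((rexp t : ℝ) : ℂ) := (Complex.ofReal_exp t).symm
    have hcxt : Complex.exp (↑x * ↑t : ℂ) = ((rexp (x * t) : ℝ) : ℂ) := by
      rw [Complex.ofReal_exp]; push_cast; ring_nf
    rw [norm_bose (s - 1) x t hx ht0]
    have : ‖f t‖ = t ^ (s.re - 1) / ((rexp (x * t) - 1) * (rexp t - 1)) := by
      rw [hf]
      simp only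
      rw [norm_div, Complex.norm_cpow_eq_rpow_re_of_pos ht0,
        Complex.sub_re, Complex.one_re]
      congr 1
      rw [hce, hcxt, ← Complex.ofReal_one, ← Complex.ofReal_sub, ← Complex.ofReal_sub,
        ← Complex.ofReal_mul, Complex.norm_real,
        Real.norm_of_nonneg (by nlinarith)]
    rw [this]
    have he1 : (s - 1).re - 1 = s.re - 2 := by simp [Complex.sub_re]; ring
    rw [he1]
    have key : t ^ (s.re - 1) = t ^ (s.re - 2) * t := by
      rw [show s.re - 1 = (s.re - 2) + 1 by ring, Real.rpow_add ht0, Real.rpow_one]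
    rw [key, div_le_div_iff₀ (by nlinarith) (by linarith)]
    have hp : 0 < t ^ (s.re - 2) := Real.rpow_pos_of_pos ht0 _
    have hE : 0 < rexp (x * t) - 1 := by linarith
    nlinarith [mul_le_mul_of_nonneg_left hle (mul_pos hp hE).le]
  -- pointwise identity: g = f - h₁ + (1/2) h₂ on Ioi 0
  have hpt : ∀ t ∈ Set.Ioi (0:ℝ), g t = f t - h₁ t + (1/2 : ℂ) * h₂ t := by
    intro t ht
    have ht0 : (0:ℝ) < t := ht
    have htne : (t : ℂ) ≠ 0 := by exact_mod_cast ht0.ne'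
    have hxt : (0:ℝ) < x * t := mul_pos hx ht0
    have het : (1:ℝ) < rexp t := by
      rw [← Real.exp_zero]; exact Real.exp_lt_exp.mpr ht0
    have hext : (1:ℝ) < rexp (x * t) := by
      rw [← Real.exp_zero]; exact Real.exp_lt_exp.mpr hxt
    have hetne : Complex.exp (↑t : ℂ) - 1 ≠ 0 := by
      rw [← Complex.ofReal_exp, ← Complex.ofReal_one, ← Complex.ofReal_sub, Ne,
        Complex.ofReal_eq_zero]
      linarith
    have hextne : Complex.exp (↑x * ↑t : ℂ) - 1 ≠ 0 := by
      have hcxt : Complex.exp (↑x * ↑t : ℂ) = ((rexp (x * t) : ℝ) : ℂ) := by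
        rw [Complex.ofReal_exp]; push_cast; ring_nf
      rw [hcxt, ← Complex.ofReal_one, ← Complex.ofReal_sub, Ne, Complex.ofReal_eq_zero]
      linarith
    have hcpow : (t : ℂ) ^ (s - 1) = (t : ℂ) ^ ((s - 1) - 1) * t := by
      have h := Complex.cpow_add ((s - 1) - 1) 1 htne
      rw [Complex.cpow_one, show s - 1 - 1 + 1 = s - 1 from by ring] at h
      exact h
    rw [hg, hf, hh₁, hh₂]
    simp only
    rw [hcpow]
    field_simp
  have hintg : IntegrableOn g (Set.Ioi 0) := by
    refine IntegrableOn.congr_fun ?_ (fun t ht ↦ (hpt t ht).symm) measurableSet_Ioi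
    exact (hintf.sub hint₁).add (hint₂.const_mul _)
  have hval₁ : (∫ t in Set.Ioi (0:ℝ), h₁ t)
      = (x : ℂ) ^ (1 - s) * Complex.Gamma (s - 1) * riemannZeta (s - 1) := by
    have := bose_value (s - 1) hs1 x hx
    rw [hh₁]
    rw [this, show -(s - 1) = 1 - s by ring]
  have hval₂ : (∫ t in Set.Ioi (0:ℝ), h₂ t)
      = (x : ℂ) ^ (-s) * Complex.Gamma s * riemannZeta s := by
    have := bose_value s hs' x hx
    rw [hh₂, this]
  have hsplit : (∫ t in Set.Ioi (0:ℝ), g t)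
      = (∫ t in Set.Ioi (0:ℝ), f t) - (∫ t in Set.Ioi (0:ℝ), h₁ t)
        + (1/2 : ℂ) * ∫ t in Set.Ioi (0:ℝ), h₂ t := by
    have hsub : IntegrableOn (fun t ↦ f t - h₁ t) (Set.Ioi 0) := hintf.sub hint₁
    have hmul : IntegrableOn (fun t ↦ (1/2 : ℂ) * h₂ t) (Set.Ioi 0) := hint₂.const_mul _
    rw [setIntegral_congr_fun measurableSet_Ioi hpt, integral_add hsub hmul,
      integral_sub hintf hint₁, integral_const_mul]
  show (∫ t in Set.Ioi (0:ℝ), f t) = _ - _ + ∫ t in Set.Ioi (0:ℝ), g t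
  rw [hsplit, hval₁, hval₂]
  ring
end
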